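/- Let E be a Banach space, U open in a quadrant [0,∞)^s × E, r : U → U an idempotent differentiable map with image O, preserving the degeneracy index, and let r_∂ : U_∂ → U_∂ be its boundary restriction with image O_∂ = O ∩ ({0}^s × E). Then for any fixed point x of r in U_∂ (at which r and r_∂ are differentiable), the image of D_x r_∂ equals (im D_x r) ∩ ({0}^s × E), i.e., T_x O_∂ = T_x O ∩ ({0}^s × E). -/

import Mathlib

/-- Boundary tangent spaces of a tame retract: at a fixed point `x` in the deepest corner of
the quadrant, the tangent space of the boundary retract equals the intersection of the
tangent space of the retract with `{0}^s × E`, i.e.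
`D_x r ({0}^s × E) = im(D_x r) ∩ ({0}^s × E)`. -/
theorem stmt14 {E : Type*} [NormedAddCommGroup E] [NormedSpace ℝ E] {s : ℕ}
    (Q : Set ((Fin s → ℝ) × E)) (hQ : Q = {p | ∀ i, 0 ≤ p.1 i})
    (U : Set ((Fin s → ℝ) × E)) (hUQ : U ⊆ Q)
    (hUopen : ∃ V, IsOpen V ∧ U = V ∩ Q)
    (r : (Fin s → ℝ) × E → (Fin s → ℝ) × E)
    (hmaps : Set.MapsTo r U U)
    (hdiff : DifferentiableOn ℝ r U)
    (hidem : ∀ p ∈ U, r (r p) = r p)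
    (hdeg : ∀ p ∈ U,
      Nat.card {i : Fin s // (r p).1 i = 0} = Nat.card {i : Fin s // p.1 i = 0})
    (x : (Fin s → ℝ) × E) (hx : x ∈ U) (hx0 : x.1 = 0) (hfix : r x = x)
    (D : ((Fin s → ℝ) × E) →L[ℝ] ((Fin s → ℝ) × E))
    (hD : HasFDerivWithinAt r D U x)
    (Z : Submodule ℝ ((Fin s → ℝ) × E))
    (hZ : Z = (⊥ : Submodule ℝ (Fin s → ℝ)).prod (⊤ : Submodule ℝ E)) :
    Submodule.map (D : ((Fin s → ℝ) × E) →ₗ[ℝ] ((Fin s → ℝ) × E)) Z = LinearMap.range (D : ((Fin s → ℝ) × E) →ₗ[ℝ] ((Fin s → ℝ) × E)) ⊓ Z := by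
  obtain ⟨V, hVopen, hUV⟩ := hUopen
  -- `r` maps the deepest corner stratum to itself
  have hbd : ∀ p ∈ U, p.1 = 0 → (r p).1 = 0 := by
    intro p hp hp1
    have h1 : Nat.card {i : Fin s // p.1 i = 0} = s := by
      simp only [hp1, Nat.card_eq_fintype_card]
      exact (Fintype.card_congr (Equiv.subtypeUnivEquiv fun _ => by simp)).trans
        (Fintype.card_fin s)
    have h2 := (hdeg p hp).trans h1
    have hset : {i : Fin s | (r p).1 i = 0} = Set.univ := by
      have hn : {i : Fin s | (r p).1 i = 0}.ncard = s := by
        rw [← Nat.card_coe_set_eq]; exact h2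
      apply Set.eq_of_subset_of_ncard_le (Set.subset_univ _)
      rw [Set.ncard_univ, Nat.card_eq_fintype_card, Fintype.card_fin, hn]
    funext i
    exact (Set.eq_univ_iff_forall.mp hset) i
  -- `Q` is convex with nonempty interior, hence `U` has unique differentiability at `x`
  have hQconv : Convex ℝ Q := by
    rw [hQ]
    intro p hp q hq a b ha hb hab
    intro i
    have : (a • p + b • q).1 i = a * p.1 i + b * q.1 i := rfl
    rw [Set.mem_setOf_eq] at hp hq
    simp only [Set.mem_setOf_eq, this]
    exact add_nonneg (mul_nonneg ha (hp i)) (mul_nonneg hb (hq i))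
  have hQint : (interior Q).Nonempty := by
    refine ⟨((fun _ => 1), 0), ?_⟩
    apply mem_interior.mpr
    refine ⟨{p | ∀ i, 0 < p.1 i}, ?_, ?_, ?_⟩
    · rw [hQ]; intro p hp i; exact (hp i).le
    · have : {p : (Fin s → ℝ) × E | ∀ i, 0 < p.1 i} = ⋂ i, {p | 0 < p.1 i} := by
        ext p; simp
      rw [this]
      exact isOpen_iInter_of_finite fun i =>
        isOpen_lt continuous_const ((continuous_apply i).comp continuous_fst)
    · intro i; norm_num
  have hxQ : x ∈ Q := hUQ hx
  have hU_ud : UniqueDiffWithinAt ℝ U x := by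
    have h1 : UniqueDiffWithinAt ℝ Q x := uniqueDiffOn_convex hQconv hQint x hxQ
    have hxV : x ∈ V := by rw [hUV] at hx; exact hx.1
    have := h1.inter (hVopen.mem_nhds hxV)
    rwa [hUV, Set.inter_comm]
  -- idempotence of `D`
  have hDD : ∀ v, D (D v) = D v := by
    have hcomp : HasFDerivWithinAt (r ∘ r) (D.comp D) U x := by
      exact HasFDerivWithinAt.comp x (by rw [hfix]; exact hD) hD hmaps
    have hcomp' : HasFDerivWithinAt r (D.comp D) U x :=
      hcomp.congr (fun y hy => (hidem y hy).symm) (by simp [hidem x hx])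
    have heq : D.comp D = D := hU_ud.eq hcomp' hD
    intro v
    calc D (D v) = (D.comp D) v := rfl
    _ = D v := by rw [heq]
  -- `D` maps `Z` into `Z`
  have hDZ : ∀ ξ ∈ Z, D ξ ∈ Z := by
    intro ξ hξ
    rw [hZ, Submodule.mem_prod] at hξ ⊢
    refine ⟨?_, trivial⟩
    have hξ1 : ξ.1 = 0 := hξ.1
    -- the curve t ↦ x + t • ξ stays in the corner stratum of U for small t ≥ 0
    set γ : ℝ → (Fin s → ℝ) × E := fun t => x + t • ξ with hγdef
    have hγcont : Continuous γ := continuous_const.add (continuous_id.smul continuous_const)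
    have hγ0 : γ 0 = x := by simp [hγdef]
    have hγ1 : ∀ t, (γ t).1 = 0 := by
      intro t
      show x.1 + t • ξ.1 = 0
      rw [hx0, hξ1]; simp
    have hγQ : ∀ t, γ t ∈ Q := by
      intro t; rw [hQ]; intro i; rw [hγ1 t]; exact le_refl 0
    have hxV : x ∈ V := by rw [hUV] at hx; exact hx.1
    obtain ⟨ε, hε, hball⟩ := Metric.isOpen_iff.mp (hVopen.preimage hγcont) 0
      (by rw [Set.mem_preimage, hγ0]; exact hxV)
    have hmapγ : Set.MapsTo γ (Set.Ico 0 ε) U := by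
      intro t ht
      rw [hUV]
      refine ⟨hball ?_, hγQ t⟩
      rw [Metric.mem_ball, Real.dist_eq, sub_zero, abs_of_nonneg ht.1]
      exact ht.2
    have hγderiv : HasDerivWithinAt γ ξ (Set.Ico 0 ε) 0 := by
      have : HasDerivAt γ ξ 0 := by
        have h := ((hasDerivAt_id (0 : ℝ)).smul_const ξ).const_add x
        rw [one_smul] at h; exact h
      exact this.hasDerivWithinAt
    have hcomp : HasDerivWithinAt (r ∘ γ) (D ξ) (Set.Ico 0 ε) 0 := by
      exact HasFDerivWithinAt.comp_hasDerivWithinAt_of_eq 0 hD hγderiv hmapγ hγ0.symm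
    have hfstcomp : HasDerivWithinAt (fun t => (r (γ t)).1) (D ξ).1 (Set.Ico 0 ε) 0 := by
      have := (hasFDerivAt_fst (𝕜 := ℝ) (p := r (γ 0))).comp_hasDerivWithinAt
        (0 : ℝ) hcomp
      exact this
    have hzero : HasDerivWithinAt (fun t => (r (γ t)).1) 0 (Set.Ico 0 ε) 0 := by
      apply (hasDerivWithinAt_const (0:ℝ) (Set.Ico 0 ε) (0 : Fin s → ℝ)).congr
      · intro t ht
        exact hbd (γ t) (hmapγ ht) (hγ1 t)
      · rw [hγ0, hfix, hx0]
    have hud : UniqueDiffWithinAt ℝ (Set.Ico 0 ε) 0 :=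
      uniqueDiffOn_Ico 0 ε 0 ⟨le_refl 0, hε⟩
    have : (D ξ).1 = 0 := hud.eq_deriv _ hfstcomp hzero
    simpa using this
  -- conclude
  apply le_antisymm
  · rintro ζ ⟨ξ, hξZ, rfl⟩
    exact ⟨LinearMap.mem_range.mpr ⟨ξ, rfl⟩, hDZ ξ hξZ⟩
  · rintro ζ ⟨hζr, hζZ⟩
    obtain ⟨v, hv⟩ := LinearMap.mem_range.mp hζr
    refine ⟨ζ, hζZ, ?_⟩
    calc D ζ = D (D v) := by rw [← hv]; rfl
    _ = D v := hDD v
    _ = ζ := hv
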